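/- Let K be a field, α ∈ K((T)), and p, q, r ∈ K[X] with q ≠ 0 and r ≠ 0. Assume orderTop(ι p − α·ι q) > deg r + deg q. Then (r·p, r·q) is a best approximation of α: for all p', q' ∈ K[X] with q' ≠ 0, if orderTop(ι p' − α·ι q') ≥ orderTop(ι(r·p) − α·ι(r·q)) and deg q' ≤ deg(r·q), then p'·(r·q) = (r·p)·q'. In particular (taking r = 1), every convergent of α is a best approximation of α. -/

import Mathlib

open Polynomial

/-- The ring homomorphism `K[X] → K((T))` sending `X` to `T⁻¹`. -/
noncomputable def iota {K : Type*} [Field K] : Polynomial K →+* LaurentSeries K :=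
  Polynomial.eval₂RingHom (HahnSeries.C : K →+* LaurentSeries K)
    (HahnSeries.single (-1 : ℤ) (1 : K))

namespace BestApprox

variable {K : Type*} [Field K]

/-- coeff as an AddMonoidHom -/
noncomputable def coeffHom (g : ℤ) : LaurentSeries K →+ K where
  toFun x := x.coeff g
  map_zero' := rfl
  map_add' _ _ := rfl

lemma iota_eq (f : Polynomial K) :
    iota f = f.sum fun n a => HahnSeries.single (-(n : ℤ)) a := by
  show Polynomial.eval₂ _ _ f = _
  rw [Polynomial.eval₂_eq_sum]
  simp only [Polynomial.sum]
  refine Finset.sum_congr rfl fun n _ => ?_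
  rw [HahnSeries.single_pow]
  simp [HahnSeries.single_mul_single]

lemma iota_coeff (f : Polynomial K) (m : ℕ) :
    (iota f).coeff (-(m : ℤ)) = f.coeff m := by
  rw [iota_eq]
  have : (f.sum fun n a => HahnSeries.single (-(n : ℤ)) a).coeff (-(m : ℤ)) =
      f.sum fun n a => (HahnSeries.single (-(n : ℤ)) a).coeff (-(m : ℤ)) := by
    exact map_sum (coeffHom (-(m : ℤ))) _ _
  rw [this, Polynomial.sum]
  by_cases hm : m ∈ f.support
  · rw [Finset.sum_eq_single m]
    · simp
    · intro b _ hb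
      exact HahnSeries.coeff_single_of_ne (by simpa using fun h => hb h.symm)
    · intro h; exact absurd hm h
  · rw [Finset.sum_eq_zero, eq_comm]
    · simpa using Polynomial.notMem_support_iff.mp hm
    · intro b hb
      refine HahnSeries.coeff_single_of_ne ?_
      intro hbm
      have : b = m := by omega
      exact hm (this ▸ hb)

lemma iota_orderTop (f : Polynomial K) (hf : f ≠ 0) :
    (iota f).orderTop = -(f.natDegree : ℤ) := by
  refine le_antisymm ?_ ?_
  · exact HahnSeries.orderTop_le_of_coeff_ne_zero
      (by rw [iota_coeff]; exact Polynomial.leadingCoeff_ne_zero.mpr hf)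
  · by_contra hlt
    push_neg at hlt
    obtain ⟨g, hg, hgc⟩ : ∃ g : ℤ, (iota f).orderTop = (g : WithTop ℤ) ∧ (iota f).coeff g ≠ 0 := by
      have hne : iota f ≠ 0 := by
        intro h0
        rw [h0, HahnSeries.orderTop_zero] at hlt
        exact (not_top_lt hlt)
      exact ⟨(iota f).order, (HahnSeries.order_eq_orderTop_of_ne_zero hne).symm,
        HahnSeries.coeff_orderTop_ne (HahnSeries.order_eq_orderTop_of_ne_zero hne).symm⟩
    rw [hg] at hlt
    have hglt : g < -(f.natDegree : ℤ) := by exact_mod_cast hlt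
    have hg0 : g = -(((-g).toNat : ℕ) : ℤ) := by omega
    rw [hg0, iota_coeff] at hgc
    exact hgc (Polynomial.coeff_eq_zero_of_natDegree_lt (by omega))

end BestApprox

/-- If `orderTop (ι p - α ι q) > deg r + deg q` then `(r p, r q)` is a best approximation
of `α`; in particular (with `r = 1`) every convergent is a best approximation. -/
theorem best_approximation_of_common_factor {K : Type*} [Field K]
    (α : LaurentSeries K) (p q r : Polynomial K) (hq : q ≠ 0) (hr : r ≠ 0)
    (h : ((r.natDegree + q.natDegree : ℕ) : WithTop ℤ) < (iota p - α * iota q).orderTop) :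
    ∀ p' q' : Polynomial K, q' ≠ 0 →
      (iota (r * p) - α * iota (r * q)).orderTop ≤ (iota p' - α * iota q').orderTop →
      q'.natDegree ≤ (r * q).natDegree →
      p' * (r * q) = (r * p) * q' := by
  intro p' q' hq' hord hdeg
  -- reduce to p' * q = p * q'
  suffices hkey : p' * q = p * q' by
    calc p' * (r * q) = r * (p' * q) := by ring
      _ = r * (p * q') := by rw [hkey]
      _ = (r * p) * q' := by ring
  set E : LaurentSeries K := iota p - α * iota q with hE
  set E' : LaurentSeries K := iota p' - α * iota q' with hE'
  have hrq : (r * q).natDegree = r.natDegree + q.natDegree := Polynomial.natDegree_mul hr hq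
  have hfac : iota (r * p) - α * iota (r * q) = iota r * E := by
    simp only [map_mul, hE]; ring
  have hmul : (iota r).orderTop + E.orderTop ≤ (iota r * E).orderTop :=
    HahnSeries.orderTop_add_le_mul
  rw [BestApprox.iota_orderTop r hr] at hmul
  have hE'ge : (↑(-(r.natDegree : ℤ)) : WithTop ℤ) + E.orderTop ≤ E'.orderTop :=
    le_trans hmul (le_trans (le_of_eq (congrArg _ hfac.symm)) hord)
  have hEord : ((((r.natDegree : ℤ) + q.natDegree : ℤ)) : WithTop ℤ) < E.orderTop := by
    exact_mod_cast h
  have hE'big : (((q.natDegree : ℤ)) : WithTop ℤ) < E'.orderTop := by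
    calc (((q.natDegree : ℤ)) : WithTop ℤ)
        = ↑(-(r.natDegree : ℤ)) + ↑((r.natDegree : ℤ) + q.natDegree) := by
          rw [← WithTop.coe_add]; norm_num
      _ < ↑(-(r.natDegree : ℤ)) + E.orderTop :=
          WithTop.add_lt_add_left WithTop.coe_ne_top hEord
      _ ≤ E'.orderTop := hE'ge
  have h1 : (0 : WithTop ℤ) < (E' * iota q).orderTop := by
    calc (0 : WithTop ℤ) = ↑((q.natDegree : ℤ) + (-(q.natDegree : ℤ))) := by norm_num
      _ = ↑((q.natDegree : ℤ)) + ↑(-(q.natDegree : ℤ)) := WithTop.coe_add _ _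
      _ < E'.orderTop + ↑(-(q.natDegree : ℤ)) :=
          WithTop.add_lt_add_right WithTop.coe_ne_top hE'big
      _ = E'.orderTop + (iota q).orderTop := by rw [BestApprox.iota_orderTop q hq]; norm_cast
      _ ≤ _ := HahnSeries.orderTop_add_le_mul
  have hdeg' : (q'.natDegree : ℤ) ≤ (r.natDegree : ℤ) + q.natDegree := by
    rw [hrq] at hdeg; exact_mod_cast hdeg
  have h2 : (0 : WithTop ℤ) < (E * iota q').orderTop := by
    calc (0 : WithTop ℤ) ≤ ↑(((r.natDegree : ℤ) + q.natDegree) + (-(q'.natDegree : ℤ))) := by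
          exact_mod_cast (by omega : (0:ℤ) ≤ ((r.natDegree : ℤ) + q.natDegree) + (-(q'.natDegree : ℤ)))
      _ = ↑((r.natDegree : ℤ) + q.natDegree) + ↑(-(q'.natDegree : ℤ)) := WithTop.coe_add _ _
      _ < E.orderTop + ↑(-(q'.natDegree : ℤ)) :=
          WithTop.add_lt_add_right WithTop.coe_ne_top hEord
      _ = E.orderTop + (iota q').orderTop := by rw [BestApprox.iota_orderTop q' hq']; norm_cast
      _ ≤ _ := HahnSeries.orderTop_add_le_mul
  have hD : iota (p' * q - p * q') = E' * iota q - E * iota q' := by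
    simp only [map_sub, map_mul, hE, hE']; ring
  have hpos : (0 : WithTop ℤ) < (iota (p' * q - p * q')).orderTop := by
    rw [hD]
    exact lt_of_lt_of_le (lt_min h1 h2) HahnSeries.min_orderTop_le_orderTop_sub
  by_contra hne
  have hDne : p' * q - p * q' ≠ 0 := sub_ne_zero.mpr hne
  rw [BestApprox.iota_orderTop _ hDne] at hpos
  have : (0:ℤ) < -(((p' * q - p * q').natDegree : ℤ)) := by exact_mod_cast hpos
  omega
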